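/- The function f(x,y) = -(1-2ρ)log(E + x² + y²) on ℝ² with the metric g = (dx² + dy²)/(E + x² + y²) satisfies Ric + ∇²f = ρRg, where ∇²f is the Hessian of f with respect to g, Ric is the Ricci curvature, and R the scalar curvature; i.e., (ℝ², g, f) is a steady gradient Ricci–Bourguignon soliton. -/

import Mathlib

open Real

noncomputable section

/-- Coordinate partial derivative on `ℝ²`. -/
def pd (i : Fin 2) (f : (Fin 2 → ℝ) → ℝ) (p : Fin 2 → ℝ) : ℝ :=
  fderiv ℝ f p (Pi.single i 1)

/-- Christoffel symbols `Γ^k_{ij}` of a metric `g` on `ℝ²`. -/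
def christoffel (g : (Fin 2 → ℝ) → Matrix (Fin 2) (Fin 2) ℝ)
    (p : Fin 2 → ℝ) (k i j : Fin 2) : ℝ :=
  (1 / 2) * ∑ l, (g p)⁻¹ k l *
    (pd i (fun q => g q l j) p + pd j (fun q => g q i l) p - pd l (fun q => g q i j) p)

/-- Riemann curvature `R^l_{ijk}`. -/
def riemann (g : (Fin 2 → ℝ) → Matrix (Fin 2) (Fin 2) ℝ)
    (p : Fin 2 → ℝ) (l i j k : Fin 2) : ℝ :=
  pd i (fun q => christoffel g q l j k) p - pd j (fun q => christoffel g q l i k) p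
    + ∑ m, (christoffel g p l i m * christoffel g p m j k
            - christoffel g p l j m * christoffel g p m i k)

/-- Ricci curvature `Ric_{ij} = Σ_k R^k_{kij}` (contraction of the Riemann tensor). -/
def ricci (g : (Fin 2 → ℝ) → Matrix (Fin 2) (Fin 2) ℝ)
    (p : Fin 2 → ℝ) (i j : Fin 2) : ℝ :=
  ∑ k, riemann g p k k i j

/-- Scalar curvature `R = Σ_{ij} g^{ij} Ric_{ij}`. -/
def scalarCurv (g : (Fin 2 → ℝ) → Matrix (Fin 2) (Fin 2) ℝ) (p : Fin 2 → ℝ) : ℝ :=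
  ∑ i, ∑ j, (g p)⁻¹ i j * ricci g p i j

/-- Hessian of `f` with respect to the Levi-Civita connection of `g`:
`(∇²f)_{ij} = ∂_i ∂_j f - Γ^k_{ij} ∂_k f`. -/
def hess (g : (Fin 2 → ℝ) → Matrix (Fin 2) (Fin 2) ℝ)
    (f : (Fin 2 → ℝ) → ℝ) (p : Fin 2 → ℝ) (i j : Fin 2) : ℝ :=
  pd i (fun q => pd j f q) p - ∑ k, christoffel g p k i j * pd k f p

/-- The cigar Ricci–Bourguignon metric `g = (dx² + dy²)/(E + x² + y²)`. -/
def cigarRB (E : ℝ) : (Fin 2 → ℝ) → Matrix (Fin 2) (Fin 2) ℝ :=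
  fun p => (1 / (E + p 0 ^ 2 + p 1 ^ 2)) • (1 : Matrix (Fin 2) (Fin 2) ℝ)

/-- The potential function `f = -(1-2ρ) log(E + x² + y²)`. -/
def cigarPot (E ρ : ℝ) : (Fin 2 → ℝ) → ℝ :=
  fun p => -(1 - 2 * ρ) * Real.log (E + p 0 ^ 2 + p 1 ^ 2)

lemma hasS (E : ℝ) (p : Fin 2 → ℝ) :
    HasFDerivAt (fun q : Fin 2 → ℝ => E + q 0 ^ 2 + q 1 ^ 2)
      (((2 * p 0) • ContinuousLinearMap.proj 0 + (2 * p 1) • ContinuousLinearMap.proj 1 :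
        (Fin 2 → ℝ) →L[ℝ] ℝ)) p := by
  have h0 : HasFDerivAt (fun q : Fin 2 → ℝ => q 0)
      (ContinuousLinearMap.proj (R := ℝ) (φ := fun _ : Fin 2 => ℝ) 0) p :=
    (ContinuousLinearMap.proj (R := ℝ) (φ := fun _ : Fin 2 => ℝ) 0).hasFDerivAt
  have h1 : HasFDerivAt (fun q : Fin 2 → ℝ => q 1)
      (ContinuousLinearMap.proj (R := ℝ) (φ := fun _ : Fin 2 => ℝ) 1) p :=
    (ContinuousLinearMap.proj (R := ℝ) (φ := fun _ : Fin 2 => ℝ) 1).hasFDerivAt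
  have hsq : (fun q : Fin 2 → ℝ => E + q 0 ^ 2 + q 1 ^ 2)
      = fun q : Fin 2 → ℝ => E + q 0 * q 0 + q 1 * q 1 := by
    funext q; ring
  rw [hsq]
  have h := ((h0.fun_mul h0).const_add E).fun_add (h1.fun_mul h1)
  refine h.congr_fderiv ?_
  apply ContinuousLinearMap.ext
  intro v
  simp
  ring

set_option maxHeartbeats 2000000 in
lemma pd_lin (E : ℝ) (hE : 0 < E) (c₀ c₁ c₂ : ℝ) (p : Fin 2 → ℝ) (i : Fin 2) :
    pd i (fun q => (c₀ + c₁ * q 0 + c₂ * q 1) / (E + q 0 ^ 2 + q 1 ^ 2)) p =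
      ((if i = 0 then c₁ else c₂) * (E + p 0 ^ 2 + p 1 ^ 2)
        - (c₀ + c₁ * p 0 + c₂ * p 1) * (2 * p i)) / (E + p 0 ^ 2 + p 1 ^ 2) ^ 2 := by
  have hS0 : 0 < E + p 0 ^ 2 + p 1 ^ 2 := by positivity
  have hne : (E + p 0 ^ 2 + p 1 ^ 2) ≠ 0 := ne_of_gt hS0
  have h0 : HasFDerivAt (fun q : Fin 2 → ℝ => q 0)
      (ContinuousLinearMap.proj (R := ℝ) (φ := fun _ : Fin 2 => ℝ) 0) p :=
    (ContinuousLinearMap.proj (R := ℝ) (φ := fun _ : Fin 2 => ℝ) 0).hasFDerivAt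
  have h1 : HasFDerivAt (fun q : Fin 2 → ℝ => q 1)
      (ContinuousLinearMap.proj (R := ℝ) (φ := fun _ : Fin 2 => ℝ) 1) p :=
    (ContinuousLinearMap.proj (R := ℝ) (φ := fun _ : Fin 2 => ℝ) 1).hasFDerivAt
  have hN : HasFDerivAt (fun q : Fin 2 → ℝ => c₀ + c₁ * q 0 + c₂ * q 1)
      ((c₁ • ContinuousLinearMap.proj 0 + c₂ • ContinuousLinearMap.proj 1 :
        (Fin 2 → ℝ) →L[ℝ] ℝ)) p :=
    ((h0.const_mul c₁).const_add c₀).add (h1.const_mul c₂)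
  have hinv : HasFDerivAt (fun q : Fin 2 → ℝ => (E + q 0 ^ 2 + q 1 ^ 2)⁻¹)
      ((-((E + p 0 ^ 2 + p 1 ^ 2) ^ 2)⁻¹) •
        ((2 * p 0) • ContinuousLinearMap.proj 0 + (2 * p 1) • ContinuousLinearMap.proj 1 :
          (Fin 2 → ℝ) →L[ℝ] ℝ)) p :=
    (hasDerivAt_inv hne).comp_hasFDerivAt p (hasS E p)
  have hmul := hN.fun_mul hinv
  have heq : (fun q : Fin 2 → ℝ => (c₀ + c₁ * q 0 + c₂ * q 1) / (E + q 0 ^ 2 + q 1 ^ 2))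
      = fun q : Fin 2 → ℝ => (c₀ + c₁ * q 0 + c₂ * q 1) * (E + q 0 ^ 2 + q 1 ^ 2)⁻¹ := by
    funext q; rw [div_eq_mul_inv]
  rw [pd, heq, hmul.fderiv]
  fin_cases i <;>
    simp [ContinuousLinearMap.add_apply, ContinuousLinearMap.smul_apply,
      ContinuousLinearMap.proj_apply, Pi.single_apply] <;>
    field_simp <;> ring

def Cc (m k i j : Fin 2) : ℝ :=
  (if i = j then 1 else 0) * (if k = m then 1 else 0)
    - (if k = j then 1 else 0) * (if i = m then 1 else 0)
    - (if i = k then 1 else 0) * (if j = m then 1 else 0)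

lemma inv_cigar (E : ℝ) (hE : 0 < E) (q : Fin 2 → ℝ) :
    (cigarRB E q)⁻¹ = (E + q 0 ^ 2 + q 1 ^ 2) • (1 : Matrix (Fin 2) (Fin 2) ℝ) := by
  have hS0 : 0 < E + q 0 ^ 2 + q 1 ^ 2 := by positivity
  have hne : (E + q 0 ^ 2 + q 1 ^ 2) ≠ 0 := ne_of_gt hS0
  apply Matrix.inv_eq_right_inv
  rw [cigarRB, Matrix.smul_mul, Matrix.mul_smul, Matrix.one_mul, smul_smul, one_div,
    inv_mul_cancel₀ hne, one_smul]

lemma cigar_fun (E : ℝ) (a b : Fin 2) :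
    (fun q : Fin 2 → ℝ => cigarRB E q a b) =
      fun q : Fin 2 → ℝ =>
        ((if a = b then (1 : ℝ) else 0) + 0 * q 0 + 0 * q 1) / (E + q 0 ^ 2 + q 1 ^ 2) := by
  funext q
  by_cases h : a = b <;>
    simp [cigarRB, Matrix.smul_apply, Matrix.one_apply, h, div_eq_mul_inv, mul_comm]

set_option maxHeartbeats 2000000 in
lemma chris_val (E : ℝ) (hE : 0 < E) (q : Fin 2 → ℝ) (k i j : Fin 2) :
    christoffel (cigarRB E) q k i j =
      (0 + Cc 0 k i j * q 0 + Cc 1 k i j * q 1) / (E + q 0 ^ 2 + q 1 ^ 2) := by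
  have hS0 : 0 < E + q 0 ^ 2 + q 1 ^ 2 := by positivity
  have hne : (E + q 0 ^ 2 + q 1 ^ 2) ≠ 0 := ne_of_gt hS0
  rw [christoffel, Fin.sum_univ_two, inv_cigar E hE]
  simp only [cigar_fun E, pd_lin E hE, Matrix.smul_apply, Matrix.one_apply, smul_eq_mul]
  fin_cases k <;> fin_cases i <;> fin_cases j <;>
    norm_num [Cc] <;> field_simp <;> ring

set_option maxHeartbeats 2000000 in
lemma pd_pot (E ρ : ℝ) (hE : 0 < E) (p : Fin 2 → ℝ) (j : Fin 2) :
    pd j (cigarPot E ρ) p =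
      (0 + (if j = 0 then -(1 - 2 * ρ) * 2 else 0) * p 0
         + (if j = 1 then -(1 - 2 * ρ) * 2 else 0) * p 1) / (E + p 0 ^ 2 + p 1 ^ 2) := by
  have hS0 : 0 < E + p 0 ^ 2 + p 1 ^ 2 := by positivity
  have hne : (E + p 0 ^ 2 + p 1 ^ 2) ≠ 0 := ne_of_gt hS0
  have hlog : HasFDerivAt (fun q : Fin 2 → ℝ => Real.log (E + q 0 ^ 2 + q 1 ^ 2))
      ((E + p 0 ^ 2 + p 1 ^ 2)⁻¹ •
        ((2 * p 0) • ContinuousLinearMap.proj 0 + (2 * p 1) • ContinuousLinearMap.proj 1 :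
          (Fin 2 → ℝ) →L[ℝ] ℝ)) p :=
    (hasS E p).log hne
  have h := hlog.const_mul (-(1 - 2 * ρ))
  rw [pd, show cigarPot E ρ = fun p : Fin 2 → ℝ =>
      -(1 - 2 * ρ) * Real.log (E + p 0 ^ 2 + p 1 ^ 2) from rfl, h.fderiv]
  fin_cases j <;>
    simp [ContinuousLinearMap.add_apply, ContinuousLinearMap.smul_apply,
      ContinuousLinearMap.proj_apply, Pi.single_apply] <;>
    field_simp <;> ring

set_option maxHeartbeats 4000000 in
/-- `(ℝ², g, f)` with `g = (dx²+dy²)/(E+x²+y²)` and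
`f = -(1-2ρ) log(E+x²+y²)` satisfies the steady gradient Ricci–Bourguignon soliton
equation `Ric + ∇²f - ρ R g = 0`. -/
theorem cigar_is_RB_soliton (E ρ : ℝ) (hE : 0 < E) :
    ∀ p : Fin 2 → ℝ, ∀ i j : Fin 2,
      ricci (cigarRB E) p i j + hess (cigarRB E) (cigarPot E ρ) p i j
        - ρ * scalarCurv (cigarRB E) p * cigarRB E p i j = 0 := by
  intro p i j
  have hS0 : 0 < E + p 0 ^ 2 + p 1 ^ 2 := by positivity
  have hne : (E + p 0 ^ 2 + p 1 ^ 2) ≠ 0 := ne_of_gt hS0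
  simp only [ricci, riemann, hess, scalarCurv, Fin.sum_univ_two, chris_val E hE,
    pd_pot E ρ hE, pd_lin E hE, inv_cigar E hE]
  fin_cases i <;> fin_cases j <;>
    simp only [cigarRB, Matrix.smul_apply, Matrix.one_apply, smul_eq_mul, Cc] <;>
    norm_num <;> field_simp <;> ring
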